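/- Let G ≤ GL₇(𝔽̄_ℓ) be generated by a triple (ḡ₀, ḡ₁, ḡ_∞) with ḡ₀ḡ₁ḡ_∞ = 1 that is linearly rigid and whose GL₇(𝔽̄_ℓ)-conjugacy classes are each stable under the ℓ-power Frobenius map φ_ℓ applied entrywise. Then G is GL₇(𝔽̄_ℓ)-conjugate to a subgroup of GL₇(𝔽_ℓ). -/

import Mathlib

open Matrix Polynomial

set_option linter.unusedSectionVars false

section Aux
variable {K : Type*} [Field K] {ℓ : ℕ} [hp : Fact ℓ.Prime] [CharP K ℓ] [IsAlgClosed K]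

theorem artinSchreier_surj (c : K) : ∃ d : K, d^ℓ - d = c := by
  have h2 : 2 ≤ ℓ := hp.out.two_le
  have h1 : (X + C c : K[X]).degree < (X ^ ℓ : K[X]).degree := by
    rw [degree_X_pow]
    calc (X + C c : K[X]).degree ≤ 1 := by
          apply (degree_add_le _ _).trans
          rw [degree_X]
          exact max_le le_rfl (degree_C_le.trans (by norm_num))
        _ < (ℓ : WithBot ℕ) := by exact_mod_cast Nat.lt_of_lt_of_le one_lt_two h2
  have hdeg : (X ^ ℓ - X - C c : K[X]).degree = ℓ := by
    rw [sub_sub, degree_sub_eq_left_of_degree_lt h1, degree_X_pow]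
  obtain ⟨d, hd⟩ := IsAlgClosed.exists_root (X ^ ℓ - X - C c : K[X]) (by rw [hdeg]; simp; omega)
  refine ⟨d, sub_eq_zero.mp ?_⟩
  have : d ^ ℓ - d - c = 0 := by simpa [IsRoot] using hd
  rw [sub_sub] at this ⊢
  simpa using this

noncomputable def qpoly (ℓ : ℕ) (a : ℕ → K) : ℕ → K[X]
  | 0 => C (a 0) * X ^ ℓ
  | (i+1) => (qpoly ℓ a i) ^ ℓ + C (a (i+1)) * X ^ ℓ

lemma qpoly_eval_zero (a : ℕ → K) (i : ℕ) : (qpoly ℓ a i).eval 0 = 0 := by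
  have hℓ : ℓ ≠ 0 := hp.out.ne_zero
  induction i with
  | zero => simp [qpoly, zero_pow hℓ]
  | succ n ih => simp [qpoly, ih, zero_pow hℓ]

lemma qpoly_derivative (a : ℕ → K) (i : ℕ) : derivative (qpoly ℓ a i) = 0 := by
  have hc : (ℓ : K) = 0 := CharP.cast_eq_zero K ℓ
  induction i with
  | zero => simp [qpoly, derivative_X_pow, hc]
  | succ n ih => simp [qpoly, derivative_pow, derivative_X_pow, ih, hc]

lemma qpoly_natDegree (a : ℕ → K) (ha : a 0 ≠ 0) (i : ℕ) :
    (qpoly ℓ a i).natDegree = ℓ ^ (i + 1) := by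
  have h2 : 2 ≤ ℓ := hp.out.two_le
  induction i with
  | zero => simpa [qpoly] using natDegree_C_mul_X_pow ℓ (a 0) ha
  | succ n ih =>
    have hpow : ((qpoly ℓ a n) ^ ℓ).natDegree = ℓ ^ (n + 2) := by
      rw [natDegree_pow, ih]; ring
    have hlt : (C (a (n+1)) * X ^ ℓ : K[X]).natDegree < ((qpoly ℓ a n) ^ ℓ).natDegree := by
      rw [hpow]
      calc (C (a (n+1)) * X ^ ℓ : K[X]).natDegree ≤ ℓ := natDegree_C_mul_X_pow_le _ _
        _ < ℓ ^ (n+2) := by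
            calc ℓ = ℓ ^ 1 := (pow_one ℓ).symm
              _ < ℓ ^ (n+2) := Nat.pow_lt_pow_right h2 (by omega)
    rw [qpoly, natDegree_add_eq_left_of_natDegree_lt hlt, hpow]

/-- find nonzero `y` with `x (m-1) = y` for the recursion. -/
lemma exists_fixed_coeffs (m : ℕ) (hm : 0 < m) (a : ℕ → K) (ha : a 0 ≠ 0) :
    ∃ (y : K) (x : ℕ → K), y ≠ 0 ∧ x (m-1) = y ∧ x 0 = a 0 * y ^ ℓ ∧
      ∀ i, x (i+1) = x i ^ ℓ + a (i+1) * y ^ ℓ := by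
  have h2 : 2 ≤ ℓ := hp.out.two_le
  set P : K[X] := qpoly ℓ a (m-1) - X with hP
  have hc0 : P.coeff 0 = 0 := by
    rw [coeff_zero_eq_eval_zero]; simp [hP, qpoly_eval_zero]
  have hPfact : P.divX * X = P := by
    have := divX_mul_X_add P
    rwa [hc0, map_zero, add_zero] at this
  have hder : derivative P = -1 := by
    simp [hP, qpoly_derivative]
  have hR0 : (P.divX).eval 0 = -1 := by
    have : derivative P = derivative (P.divX * X) := by rw [hPfact]
    rw [hder, derivative_mul, derivative_X] at this
    have := congrArg (eval 0) this
    simpa using this.symm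
  have hRne : P.divX ≠ 0 := fun h => by simp [h] at hR0
  have hPdeg : P.natDegree = ℓ ^ m := by
    have h1 : (X : K[X]).natDegree < (qpoly ℓ a (m-1)).natDegree := by
      rw [qpoly_natDegree a ha, natDegree_X]
      calc 1 < ℓ := h2
        _ = ℓ ^ 1 := (pow_one ℓ).symm
        _ ≤ ℓ ^ (m - 1 + 1) := Nat.pow_le_pow_right (by omega) (by omega)
    rw [hP, natDegree_sub_eq_left_of_natDegree_lt h1, qpoly_natDegree a ha]
    congr 1; omega
  have hRdeg : 0 < (P.divX).natDegree := by
    rw [natDegree_divX_eq_natDegree_tsub_one, hPdeg]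
    have : 2 ≤ ℓ ^ m := le_trans h2 (Nat.le_self_pow (by omega) ℓ)
    omega
  obtain ⟨y, hy⟩ := IsAlgClosed.exists_root P.divX
    (fun h => absurd h (natDegree_pos_iff_degree_pos.mp hRdeg).ne')
  have hyne : y ≠ 0 := fun h => by rw [h] at hy; simp [IsRoot, hR0] at hy
  have hPy : P.eval y = 0 := by
    rw [← hPfact]; simp [IsRoot.def.mp hy]
  refine ⟨y, fun i => (qpoly ℓ a i).eval y, hyne, ?_, by simp [qpoly], fun i => by simp [qpoly]⟩
  exact sub_eq_zero.mp (by simpa [hP] using hPy)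

instance : RingHomSurjective (frobenius K ℓ) := ⟨(frobeniusEquiv K ℓ).surjective⟩

variable {V : Type*} [AddCommGroup V] [Module K V] [FiniteDimensional K V]

theorem span_semilinear_fixed_eq_top (σ : V →ₛₗ[frobenius K ℓ] V) (hσ : Function.Bijective σ) :
    Submodule.span K {v | σ v = v} = ⊤ := by
  classical
  set F : Set V := {v | σ v = v} with hF
  set W : Submodule K V := Submodule.span K F with hW
  by_contra hWtop
  -- basic facts about W
  have hFW : F ⊆ W := Submodule.subset_span
  have hWmap : Submodule.map σ W = W := by
    rw [hW, Submodule.map_span]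
    congr 1
    ext f
    constructor
    · rintro ⟨g, hg, rfl⟩
      have hg' : σ g = g := hg
      show σ (σ g) = σ g
      rw [hg']
      exact hg'
    · intro hf; exact ⟨f, hf, hf⟩
  have hWout : ∀ x ∈ W, σ x ∈ W := fun x hx => hWmap ▸ Submodule.mem_map_of_mem hx
  have hWin : ∀ x, σ x ∈ W → x ∈ W := by
    intro x hx
    rw [← hWmap] at hx
    obtain ⟨w, hw, hwx⟩ := hx
    rwa [← hσ.injective hwx]
  -- surjectivity of (σ - id) on W
  have hsurjW : ∀ w ∈ W, ∃ u ∈ W, σ u - u = w := by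
    intro w hw
    rw [hW, Submodule.mem_span_set] at hw
    obtain ⟨c, hsupp, hsum⟩ := hw
    choose d hd using fun f : V => artinSchreier_surj (ℓ := ℓ) (c f)
    refine ⟨∑ f ∈ c.support, d f • f, ?_, ?_⟩
    · exact Submodule.sum_mem _ fun f hf => Submodule.smul_mem _ _ (hFW (hsupp hf))
    · rw [map_sum, ← Finset.sum_sub_distrib]
      rw [← hsum]
      rw [Finsupp.sum]
      apply Finset.sum_congr rfl
      intro f hf
      have hffix : σ f = f := hsupp hf
      rw [map_smulₛₗ, hffix, frobenius_def, ← sub_smul, hd]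
  -- pick v ∉ W and iterate
  have hWlt : W < (⊤ : Submodule K V) := lt_of_le_of_ne le_top hWtop
  obtain ⟨v, -, hv⟩ := SetLike.exists_of_lt hWlt
  set e : ℕ → V := fun i => σ^[i] v with he
  have hes : ∀ i, e (i + 1) = σ (e i) := fun i => Function.iterate_succ_apply' σ i v
  set U : ℕ → Submodule K V := fun n => W ⊔ Submodule.span K (Set.range fun i : Fin n => e i)
    with hU
  have hsum_mem : ∀ (n : ℕ) (f : ℕ → K),
      (∑ i ∈ Finset.range n, f i • e i) ∈ Submodule.span K (Set.range fun i : Fin n => e i) := by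
    intro n f
    apply Submodule.sum_mem
    intro i hi
    exact Submodule.smul_mem _ _
      (Submodule.subset_span ⟨⟨i, Finset.mem_range.mp hi⟩, rfl⟩)
  have hexists : ∃ n, e n ∈ U n := by
    by_contra hno
    push_neg at hno
    have hrank : ∀ n, n ≤ Module.finrank K (U n) := by
      intro n
      induction n with
      | zero => exact Nat.zero_le _
      | succ k ih =>
        have hlt : U k < U (k + 1) := by
          refine lt_of_le_of_ne ?_ ?_
          · apply sup_le_sup_left
            apply Submodule.span_mono
            rintro x ⟨i, rfl⟩
            exact ⟨⟨i.1, Nat.lt_succ_of_lt i.2⟩, rfl⟩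
          · intro hEq
            apply hno k
            rw [hEq]
            exact le_sup_right (α := Submodule K V)
              (Submodule.subset_span ⟨⟨k, Nat.lt_succ_self k⟩, rfl⟩)
        exact Nat.lt_of_le_of_lt ih (Submodule.finrank_lt_finrank_of_lt hlt)
    have h1 := hrank (Module.finrank K V + 1)
    have h2 := Submodule.finrank_le (U (Module.finrank K V + 1))
    omega
  set m := Nat.find hexists with hmdef
  have hm : e m ∈ U m := Nat.find_spec hexists
  have hmin : ∀ k < m, e k ∉ U k := fun k hk => Nat.find_min hexists hk
  have hm0 : 0 < m := by
    rcases Nat.eq_zero_or_pos m with h | h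
    · exfalso
      rw [h] at hm
      simp only [hU] at hm
      rw [show (Set.range fun i : Fin 0 => e i) = ∅ by simp, Submodule.span_empty,
        sup_bot_eq] at hm
      exact hv hm
    · exact h
  -- decompose e m
  obtain ⟨w, hwW, z, hz, hwz⟩ := Submodule.mem_sup.mp hm
  obtain ⟨cc, hcc⟩ := (Submodule.mem_span_range_iff_exists_fun K).mp hz
  set a : ℕ → K := fun i => if h : i < m then cc ⟨i, h⟩ else 0 with ha
  have hem : e m = w + ∑ i ∈ Finset.range m, a i • e i := by
    rw [← hwz, ← hcc]
    congr 1
    rw [← Fin.sum_univ_eq_sum_range (fun i => a i • e i) m]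
    apply Finset.sum_congr rfl
    intro i _
    simp [ha, i.2]
  -- a 0 ≠ 0
  have ha0 : a 0 ≠ 0 := by
    intro h0
    set b : ℕ → K := fun i => (frobeniusEquiv K ℓ).symm (a (i+1)) with hb
    have hb' : ∀ i, frobenius K ℓ (b i) = a (i+1) := fun i =>
      (frobeniusEquiv K ℓ).apply_symm_apply _
    have hσx : σ (e (m-1) - ∑ i ∈ Finset.range (m-1), b i • e i) = w := by
      rw [map_sub, map_sum]
      have h1 : σ (e (m-1)) = e m := by rw [← hes]; congr 1; omega
      have h2 : ∀ i ∈ Finset.range (m-1), σ (b i • e i) = a (i+1) • e (i+1) := by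
        intro i _
        rw [map_smulₛₗ, hb', hes]
      rw [h1, Finset.sum_congr rfl h2, hem]
      have h3 : ∑ i ∈ Finset.range m, a i • e i
          = ∑ i ∈ Finset.range (m-1), a (i+1) • e (i+1) + a 0 • e 0 := by
        conv_lhs => rw [show m = (m-1)+1 by omega]
        rw [Finset.sum_range_succ']
      rw [h3, h0, zero_smul, add_zero]
      abel
    have hxW : e (m-1) - ∑ i ∈ Finset.range (m-1), b i • e i ∈ W := hWin _ (hσx ▸ hwW)
    apply hmin (m-1) (by omega)
    have hEq : e (m-1) = (e (m-1) - ∑ i ∈ Finset.range (m-1), b i • e i)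
        + ∑ i ∈ Finset.range (m-1), b i • e i := by abel
    rw [hEq]
    exact Submodule.add_mem _ (Submodule.mem_sup_left hxW)
      (Submodule.mem_sup_right (hsum_mem (m-1) b))
  -- main construction of a fixed vector outside W
  obtain ⟨y, x, hy, hxm, hx0, hxs⟩ := exists_fixed_coeffs (ℓ := ℓ) m hm0 a ha0
  set u₀ : V := ∑ i ∈ Finset.range m, x i • e i with hu₀
  have hσu₀ : σ u₀ = u₀ + (y ^ ℓ) • w := by
    have lhs1 : σ u₀ = ∑ i ∈ Finset.range (m-1), (x i ^ ℓ) • e (i+1) + (y ^ ℓ) • e m := by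
      rw [hu₀, map_sum]
      have h2 : ∀ i ∈ Finset.range m, σ (x i • e i) = (x i ^ ℓ) • e (i+1) := fun i _ => by
        rw [map_smulₛₗ, frobenius_def, hes]
      rw [Finset.sum_congr rfl h2]
      conv_lhs => rw [show m = (m-1)+1 by omega, Finset.sum_range_succ]
      rw [show m-1+1 = m by omega, hxm]
    have rhs1 : u₀ = ∑ i ∈ Finset.range (m-1), (x i ^ ℓ) • e (i+1)
        + (y ^ ℓ) • (∑ i ∈ Finset.range m, a i • e i) := by
      have hsmul : (y ^ ℓ) • (∑ i ∈ Finset.range m, a i • e i)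
          = ∑ i ∈ Finset.range (m-1), (a (i+1) * y ^ ℓ) • e (i+1) + (a 0 * y ^ ℓ) • e 0 := by
        rw [Finset.smul_sum]
        conv_lhs => rw [show m = (m-1)+1 by omega, Finset.sum_range_succ']
        congr 1
        · apply Finset.sum_congr rfl; intro i _; rw [smul_smul, mul_comm]
        · rw [smul_smul, mul_comm]
      rw [hsmul, hu₀]
      conv_lhs => rw [show m = (m-1)+1 by omega, Finset.sum_range_succ']
      have h4 : ∀ i ∈ Finset.range (m-1),
          x (i+1) • e (i+1) = (x i ^ ℓ) • e (i+1) + (a (i+1) * y ^ ℓ) • e (i+1) := by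
        intro i _
        rw [hxs, add_smul]
      rw [Finset.sum_congr rfl h4, Finset.sum_add_distrib, hx0]
      abel
    rw [lhs1, hem, smul_add]
    conv_rhs => rw [rhs1]
    abel
  have hu₀W : u₀ ∉ W := by
    intro hW0
    apply hmin (m-1) (by omega)
    have hrepr : e (m-1) = y⁻¹ • (u₀ - ∑ i ∈ Finset.range (m-1), x i • e i) := by
      have h5 : u₀ = ∑ i ∈ Finset.range (m-1), x i • e i + y • e (m-1) := by
        rw [hu₀]
        conv_lhs => rw [show m = (m-1)+1 by omega, Finset.sum_range_succ]
        rw [hxm]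
      rw [h5, add_sub_cancel_left, smul_smul, inv_mul_cancel₀ hy, one_smul]
    rw [hrepr]
    exact Submodule.smul_mem _ _ (Submodule.sub_mem _ (Submodule.mem_sup_left hW0)
      (Submodule.mem_sup_right (hsum_mem (m-1) x)))
  obtain ⟨u, huW, hu⟩ := hsurjW (-((y ^ ℓ) • w))
    (Submodule.neg_mem _ (Submodule.smul_mem _ _ hwW))
  have hσu : σ u = u - (y ^ ℓ) • w := by
    have := hu
    rw [sub_eq_iff_eq_add] at this
    rw [this]
    abel
  have hfix : u₀ + u ∈ F := by
    show σ (u₀ + u) = u₀ + u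
    rw [map_add, hσu₀, hσu]
    abel
  have h6 : u₀ + u ∈ W := hFW hfix
  have h7 : u₀ ∈ W := by
    have := Submodule.sub_mem W h6 huW
    simpa using this
  exact hu₀W h7

variable {n : Type*} [Fintype n] [DecidableEq n]

noncomputable def sigmaOf (g : GL n K) : (n → K) →ₛₗ[frobenius K ℓ] (n → K) where
  toFun v := (g : Matrix n n K) *ᵥ fun i => frobenius K ℓ (v i)
  map_add' u v := by
    have h : (fun i => frobenius K ℓ ((u + v) i))
        = (fun i => frobenius K ℓ (u i)) + fun i => frobenius K ℓ (v i) := by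
      funext i; simp
    rw [h, Matrix.mulVec_add]
  map_smul' c v := by
    have h : (fun i => frobenius K ℓ ((c • v) i))
        = frobenius K ℓ c • fun i => frobenius K ℓ (v i) := by
      funext i
      simp [smul_eq_mul, _root_.map_mul]
    rw [h, Matrix.mulVec_smul]

theorem sigmaOf_bijective (g : GL n K) : Function.Bijective (sigmaOf (ℓ := ℓ) g) := by
  have hinv : Function.LeftInverse
      (fun v : n → K => fun i => (frobeniusEquiv K ℓ).symm ((((g⁻¹ : GL n K) : Matrix n n K) *ᵥ v) i))
      (sigmaOf (ℓ := ℓ) g) ∧ Function.RightInverse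
      (fun v : n → K => fun i => (frobeniusEquiv K ℓ).symm ((((g⁻¹ : GL n K) : Matrix n n K) *ᵥ v) i))
      (sigmaOf (ℓ := ℓ) g) := by
    constructor
    · intro v
      show (fun i => (frobeniusEquiv K ℓ).symm
        ((((g⁻¹ : GL n K) : Matrix n n K) *ᵥ ((g : Matrix n n K) *ᵥ fun i => frobenius K ℓ (v i))) i)) = v
      funext i
      rw [Matrix.mulVec_mulVec]
      have : ((g⁻¹ : GL n K) : Matrix n n K) * (g : Matrix n n K) = 1 := by
        rw [← Units.val_mul, inv_mul_cancel, Units.val_one]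
      rw [this, Matrix.one_mulVec]
      exact (frobeniusEquiv K ℓ).symm_apply_apply _
    · intro v
      show ((g : Matrix n n K) *ᵥ fun i => frobenius K ℓ
        ((frobeniusEquiv K ℓ).symm ((((g⁻¹ : GL n K) : Matrix n n K) *ᵥ v) i))) = v
      have h : (fun i => frobenius K ℓ ((frobeniusEquiv K ℓ).symm
          ((((g⁻¹ : GL n K) : Matrix n n K) *ᵥ v) i)))
          = ((g⁻¹ : GL n K) : Matrix n n K) *ᵥ v := by
        funext i
        exact (frobeniusEquiv K ℓ).apply_symm_apply _
      rw [h, Matrix.mulVec_mulVec]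
      have : (g : Matrix n n K) * ((g⁻¹ : GL n K) : Matrix n n K) = 1 := by
        rw [← Units.val_mul, mul_inv_cancel, Units.val_one]
      rw [this, Matrix.one_mulVec]
  exact Function.bijective_iff_has_inverse.mpr ⟨_, hinv.1, hinv.2⟩

theorem lang_GL (g : GL n K) :
    ∃ P : GL n K, (P : Matrix n n K)
      = (g : Matrix n n K) * (P : Matrix n n K).map (frobenius K ℓ) := by
  classical
  set σ := sigmaOf (ℓ := ℓ) g with hσdef
  have hspan := span_semilinear_fixed_eq_top σ (sigmaOf_bijective g)
  obtain ⟨s, hsF, hspan', hind⟩ := exists_linearIndependent K {v | σ v = v}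
  rw [hspan] at hspan'
  have hsfin : s.Finite := hind.setFinite
  letI := hsfin.fintype
  let b : Module.Basis s K (n → K) := Module.Basis.mk hind (by rw [Subtype.range_val, hspan'])
  have hcard : Fintype.card s = Fintype.card n := by
    have h1 := Module.finrank_eq_card_basis b
    have h2 : Module.finrank K (n → K) = Fintype.card n := Module.finrank_pi K
    omega
  let eqv : s ≃ n := Fintype.equivOfCardEq hcard
  let b' : Module.Basis n K (n → K) := b.reindex eqv
  have hb'fix : ∀ j, σ (b' j) = b' j := by
    intro j
    have : b' j = (eqv.symm j : n → K) := by
      rw [Module.Basis.reindex_apply, Module.Basis.coe_mk]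
    rw [this]
    exact hsF (eqv.symm j).2
  let P : Matrix n n K := (Pi.basisFun K n).toMatrix ⇑b'
  haveI : Invertible P := (Pi.basisFun K n).invertibleToMatrix b'
  refine ⟨unitOfInvertible P, ?_⟩
  have hPval : (↑(unitOfInvertible P) : Matrix n n K) = P := rfl
  rw [hPval]
  ext i j
  have hPentry : ∀ k l, P k l = b' l k := by
    intro k l
    show (Pi.basisFun K n).toMatrix ⇑b' k l = _
    rw [Module.Basis.toMatrix_apply, Pi.basisFun_repr]
  rw [Matrix.mul_apply]
  have : ∑ k, (g : Matrix n n K) i k * (P.map (frobenius K ℓ)) k j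
      = σ (b' j) i := by
    show _ = ((g : Matrix n n K) *ᵥ fun k => frobenius K ℓ (b' j k)) i
    rw [Matrix.mulVec]
    simp only [Matrix.map_apply, hPentry, dotProduct]
  rw [this, hb'fix j, hPentry]

end Aux

/-- If a triple `(ḡ₀, ḡ₁, ḡ_∞)` in `GL₇(𝔽̄_ℓ)` with product `1` is
linearly rigid and each of its `GL₇(𝔽̄_ℓ)`-conjugacy classes is stable under the
entrywise `ℓ`-power Frobenius, then the subgroup generated by the triple is
`GL₇(𝔽̄_ℓ)`-conjugate to a subgroup of `GL₇(𝔽_ℓ)`, i.e. one can simultaneously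
conjugate the generators so that all entries are fixed by `x ↦ x^ℓ`. -/
theorem rigid_frobenius_stable_descends_to_prime_field
    (ℓ : ℕ) [Fact ℓ.Prime]
    (K : Type*) [Field K] [IsAlgClosed K] [CharP K ℓ]
    (g₀ g₁ gInf : GL (Fin 7) K) (hprod : g₀ * g₁ * gInf = 1)
    (hrigid : ∀ h₀ h₁ hInf : GL (Fin 7) K, h₀ * h₁ * hInf = 1 →
      IsConj g₀ h₀ → IsConj g₁ h₁ → IsConj gInf hInf →
      ∃ g : GL (Fin 7) K, h₀ = g⁻¹ * g₀ * g ∧ h₁ = g⁻¹ * g₁ * g ∧ hInf = g⁻¹ * gInf * g)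
    (hstab : ∀ i ∈ ({g₀, g₁, gInf} : Set (GL (Fin 7) K)),
      ∃ c : GL (Fin 7) K,
        (i : Matrix (Fin 7) (Fin 7) K).map (fun x => x ^ ℓ)
          = ((c⁻¹ * i * c : GL (Fin 7) K) : Matrix (Fin 7) (Fin 7) K)) :
    ∃ P : GL (Fin 7) K, ∀ i ∈ ({g₀, g₁, gInf} : Set (GL (Fin 7) K)),
      ∀ a b : Fin 7,
        ((P⁻¹ * i * P : GL (Fin 7) K) : Matrix (Fin 7) (Fin 7) K) a b ^ ℓ
          = ((P⁻¹ * i * P : GL (Fin 7) K) : Matrix (Fin 7) (Fin 7) K) a b := by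
  classical
  have hfrob : ⇑(frobenius K ℓ) = fun x : K => x ^ ℓ := funext fun x => frobenius_def ℓ x
  set Φ : GL (Fin 7) K →* GL (Fin 7) K :=
    Units.map ((frobenius K ℓ).mapMatrix.toMonoidHom) with hΦ
  have hΦval : ∀ u : GL (Fin 7) K,
      (↑(Φ u) : Matrix (Fin 7) (Fin 7) K) = (↑u : Matrix (Fin 7) (Fin 7) K).map (frobenius K ℓ) :=
    fun u => rfl
  have hconj : ∀ i ∈ ({g₀, g₁, gInf} : Set (GL (Fin 7) K)), IsConj i (Φ i) := by
    intro i hi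
    obtain ⟨c, hc⟩ := hstab i hi
    have heq : Φ i = c⁻¹ * i * c := by
      apply Units.ext
      rw [hΦval, hfrob, hc]
    rw [heq, isConj_iff]
    exact ⟨c⁻¹, by group⟩
  have hprodΦ : Φ g₀ * Φ g₁ * Φ gInf = 1 := by rw [← _root_.map_mul, ← _root_.map_mul, hprod, _root_.map_one]
  obtain ⟨g, h0, h1, hInf⟩ := hrigid (Φ g₀) (Φ g₁) (Φ gInf) hprodΦ
    (hconj _ (by simp)) (hconj _ (by simp)) (hconj _ (by simp))
  obtain ⟨P, hP⟩ := lang_GL (ℓ := ℓ) g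
  refine ⟨P, ?_⟩
  intro i hi a b
  have hΦP : Φ P = g⁻¹ * P := by
    apply Units.ext
    rw [hΦval, Units.val_mul]
    calc (↑P : Matrix (Fin 7) (Fin 7) K).map (frobenius K ℓ)
        = (↑g⁻¹ * ↑g : Matrix (Fin 7) (Fin 7) K) * (↑P : Matrix (Fin 7) (Fin 7) K).map (frobenius K ℓ) := by
          rw [← Units.val_mul, inv_mul_cancel, Units.val_one, one_mul]
      _ = ↑g⁻¹ * (↑P : Matrix (Fin 7) (Fin 7) K) := by rw [mul_assoc, ← hP]
  have hΦi : Φ i = g⁻¹ * i * g := by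
    simp only [Set.mem_insert_iff, Set.mem_singleton_iff] at hi
    rcases hi with rfl | rfl | rfl
    · exact h0.symm ▸ h0
    · exact h1
    · exact hInf
  have key : Φ (P⁻¹ * i * P) = P⁻¹ * i * P := by
    rw [_root_.map_mul, _root_.map_mul, map_inv, hΦi, hΦP]
    group
  have h7 := congrArg Units.val key
  rw [hΦval] at h7
  have h8 := congrFun (congrFun h7 a) b
  simpa [Matrix.map_apply, frobenius_def] using h8
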